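/- In the general demand duopoly with q₁ > 0 and any fixed T ≥ 1, for every real p ≠ δ·V(1,T−1) the function W_T is differentiable at p with derivative (1−q₀)·(P*(2,T) − δ·V(1,T−1))/(q₁·(p − δ·V(1,T−1))²). In particular, if moreover q₀ ∈ (0,1) and Σ_{i≥2} q_i > 0, this derivative is strictly positive for every p ∈ (P*(2,T), p̄). -/

import Mathlib

/-- General demand duopoly: away from `δ V(1,T-1)` the map `W_T` is differentiable with
derivative `(1-q₀)(P*(2,T) - δ V(1,T-1)) / (q₁ (p - δ V(1,T-1))²)`; moreover, if
`q₀ ∈ (0,1)` and `Σ_{i≥2} qᵢ > 0`, this derivative is strictly positive on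
`(P*(2,T), p̄)`. -/
theorem stmt8 (q : ℕ → ℝ) (δ pbar : ℝ)
    (hqnn : ∀ i, 0 ≤ q i) (hqsummable : Summable q) (hqsum : ∑' i, q i = 1)
    (hq0 : q 0 < 1) (hq1pos : 0 < q 1)
    (hδ0 : 0 < δ) (hδ1 : δ ≤ 1) (hpbar : 0 < pbar)
    (V : ℕ → ℕ → ℝ)
    (hV0 : ∀ N : ℕ, 1 ≤ N → V N 0 = 0)
    (hVrec : ∀ N T : ℕ, 1 ≤ N → 1 ≤ T →
      V N T = ∑ i ∈ Finset.range N, q i * δ * V (N - i) (T - 1) + (∑' i, q (N + i)) * pbar)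
    (T : ℕ) (hT : 1 ≤ T)
    (W : ℝ → ℝ)
    (hW : ∀ p : ℝ, p ≠ δ * V 1 (T - 1) →
      W p = (V 2 T - q 0 * δ * V 2 (T - 1) - (1 - q 0) * p) /
        (q 1 * (δ * V 1 (T - 1) - p))) :
    (∀ p : ℝ, p ≠ δ * V 1 (T - 1) →
      HasDerivAt W
        ((1 - q 0) * ((V 2 T - q 0 * δ * V 2 (T - 1)) / (1 - q 0) - δ * V 1 (T - 1)) /
          (q 1 * (p - δ * V 1 (T - 1)) ^ 2)) p) ∧
    (0 < q 0 → 0 < ∑' i, q (2 + i) →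
      ∀ p : ℝ, (V 2 T - q 0 * δ * V 2 (T - 1)) / (1 - q 0) < p → p < pbar →
        0 < (1 - q 0) * ((V 2 T - q 0 * δ * V 2 (T - 1)) / (1 - q 0) - δ * V 1 (T - 1)) /
          (q 1 * (p - δ * V 1 (T - 1)) ^ 2)) := by
  have hb : (0:ℝ) < 1 - q 0 := by linarith
  set c := δ * V 1 (T - 1) with hc
  set A := V 2 T - q 0 * δ * V 2 (T - 1) with hA
  constructor
  · intro p hp
    have hcp : c - p ≠ 0 := sub_ne_zero.mpr (fun h => hp h.symm)
    have hd : HasDerivAt (fun x => (A - (1 - q 0) * x) / (q 1 * (c - x)))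
        ((-(1 - q 0) * (q 1 * (c - p)) - (A - (1 - q 0) * p) * (-(q 1))) /
          (q 1 * (c - p)) ^ 2) p := by
      have h1 : HasDerivAt (fun x : ℝ => A - (1 - q 0) * x) (-(1 - q 0)) p := by
        simpa using ((hasDerivAt_id p).const_mul (1 - q 0)).const_sub A
      have h2 : HasDerivAt (fun x : ℝ => q 1 * (c - x)) (-(q 1)) p := by
        simpa using ((hasDerivAt_id p).const_sub c).const_mul (q 1)
      exact h1.div h2 (mul_ne_zero (ne_of_gt hq1pos) hcp)
    have heq : W =ᶠ[nhds p] fun x => (A - (1 - q 0) * x) / (q 1 * (c - x)) := by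
      filter_upwards [isOpen_ne.mem_nhds hp] with x hx
      exact hW x hx
    have hfinal := hd.congr_of_eventuallyEq heq
    convert hfinal using 1
    · exact rfl
    · exact rfl
    have hpc : p - c ≠ 0 := sub_ne_zero.mpr hp
    field_simp
    ring
  · intro hq0pos hr p hp1 hp2
    -- tail sums
    have t1 : ∑ i ∈ Finset.range 1, q i + ∑' i, q (i + 1) = 1 := by
      rw [Summable.sum_add_tsum_nat_add 1 hqsummable, hqsum]
    have t2 : ∑ i ∈ Finset.range 2, q i + ∑' i, q (i + 2) = 1 := by
      rw [Summable.sum_add_tsum_nat_add 2 hqsummable, hqsum]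
    simp [Finset.sum_range_succ] at t1 t2
    have e1 : (∑' i, q (1 + i)) = 1 - q 0 := by
      have : (∑' i, q (1 + i)) = ∑' i, q (i + 1) := by
        apply tsum_congr; intro i; rw [add_comm]
      rw [this]; linarith
    have e2 : (∑' i, q (2 + i)) = 1 - q 0 - q 1 := by
      have : (∑' i, q (2 + i)) = ∑' i, q (i + 2) := by
        apply tsum_congr; intro i; rw [add_comm]
      rw [this]; linarith
    -- V 1 is nonnegative and δ V 1 t < pbar
    have hV1 : ∀ t : ℕ, 0 ≤ V 1 t ∧ δ * V 1 t < pbar := by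
      intro t
      induction t with
      | zero => simp [hV0 1 le_rfl, hpbar]
      | succ n ih =>
        have hrec := hVrec 1 (n + 1) le_rfl (Nat.le_add_left 1 n)
        simp only [Finset.sum_range_one, Nat.add_sub_cancel] at hrec
        rw [e1] at hrec
        obtain ⟨ihn, ihl⟩ := ih
        have h1 : 0 ≤ V 1 (n + 1) := by
          rw [hrec]
          have : 0 ≤ q 0 * δ * V 1 n := by positivity
          nlinarith
        refine ⟨h1, ?_⟩
        have h2 : V 1 (n + 1) < pbar := by
          rw [hrec]; nlinarith
        nlinarith
    have hcpbar : c < pbar := by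
      have := (hV1 (T - 1)).2
      simpa [hc] using this
    -- recursion for N = 2
    have hrec2 := hVrec 2 T (by norm_num) hT
    have hsum2 : ∑ i ∈ Finset.range 2, q i * δ * V (2 - i) (T - 1)
        = q 0 * δ * V 2 (T - 1) + q 1 * δ * V 1 (T - 1) := by
      simp [Finset.sum_range_succ]
    rw [hsum2] at hrec2
    have hAval : A = q 1 * c + (∑' i, q (2 + i)) * pbar := by
      rw [hA, hrec2, hc]; ring
    have hkey : 0 < A / (1 - q 0) - c := by
      rw [hAval, e2]
      have : (q 1 * c + (1 - q 0 - q 1) * pbar) / (1 - q 0) - c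
          = (1 - q 0 - q 1) * (pbar - c) / (1 - q 0) := by
        field_simp; ring
      rw [this]
      have hr' : 0 < 1 - q 0 - q 1 := by rw [e2] at hr; linarith
      exact div_pos (mul_pos hr' (by linarith)) hb
    have hpc : 0 < p - c := by
      have : c < A / (1 - q 0) := by linarith
      linarith
    have hpc2 : 0 < (p - c) ^ 2 := pow_pos hpc 2
    apply div_pos
    · exact mul_pos hb hkey
    · exact mul_pos hq1pos hpc2
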